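/- Spectral representation of the characteristic function: in the setting of a QID random measure Λ on a δ-ring 𝒮 (with increasing cover Sₙ ↑ S) whose values Λ(A) have characteristic triplets (ν₀(A), ν₁(A), F_A) satisfying condition (★), let λ = |ν₀| + ν₁ + ν be the control measure extended to σ(𝒮), let a(s) = (dν₀/dλ)(s), σ²(s) = (dν₁/dλ)(s) (Radon–Nikodym derivatives), and let ρ = ρ⁺ − ρ⁻ be the measurable family of quasi-Lévy type measures disintegrating F with respect to λ. Define K(θ,s) = iθa(s) − (θ²/2)σ²(s) + ∫_ℝ(e^{iθx} − 1 − iθτ(x))ρ(s,dx). Then for every A ∈ 𝒮 and θ ∈ ℝ, E[e^{iθΛ(A)}] = exp( ∫_A K(θ,s) λ(ds) ). Moreover, |a(s)| + σ²(s) + (dν/dλ)(s) = 1 for λ-almost every s ∈ S. -/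

import Mathlib

open MeasureTheory Set Filter Topology
open scoped ENNReal NNReal

/-- A δ-ring of subsets: nonempty, closed under finite unions, set differences,
and countable intersections. -/
structure IsDeltaRing {T : Type*} (𝒜 : Set (Set T)) : Prop where
  nonempty : 𝒜.Nonempty
  union_mem : ∀ ⦃A B : Set T⦄, A ∈ 𝒜 → B ∈ 𝒜 → A ∪ B ∈ 𝒜
  diff_mem : ∀ ⦃A B : Set T⦄, A ∈ 𝒜 → B ∈ 𝒜 → A \ B ∈ 𝒜
  iInter_mem : ∀ A : ℕ → Set T, (∀ n, A n ∈ 𝒜) → (⋂ n, A n) ∈ 𝒜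

/-- A real-valued signed measure on a δ-ring `𝒜`: it vanishes on `∅` and is σ-additive
(with unconditionally convergent series, captured by `HasSum`) on every sequence of
pairwise disjoint members of `𝒜` whose union lies in `𝒜`. -/
def IsSignedMeasureOn {T : Type*} (𝒜 : Set (Set T)) (μ : Set T → ℝ) : Prop :=
  μ ∅ = 0 ∧ ∀ A : ℕ → Set T, (∀ n, A n ∈ 𝒜) → Pairwise (Function.onFun Disjoint A) →
    (⋃ n, A n) ∈ 𝒜 → HasSum (fun n => μ (A n)) (μ (⋃ n, A n))

/-- A finite (real-valued, countably additive) signed measure on the σ-algebra of a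
measurable space. -/
def IsFiniteSignedMeasure {X : Type*} [MeasurableSpace X] (μ : Set X → ℝ) : Prop :=
  μ ∅ = 0 ∧ ∀ B : ℕ → Set X, (∀ n, MeasurableSet (B n)) →
    Pairwise (Function.onFun Disjoint B) → HasSum (fun n => μ (B n)) (μ (⋃ n, B n))

/-- The set of sums `∑ i, |Q₀ (Aᵢ) (Bᵢ)|` over all finite families of pairwise disjoint
rectangles `Aᵢ × Bᵢ` with `Aᵢ ∈ 𝒜`, `Aᵢ ⊆ A`, `Bᵢ` measurable. -/
def RectSums {T X : Type*} [MeasurableSpace X] (𝒜 : Set (Set T))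
    (Q₀ : Set T → Set X → ℝ) (A : Set T) : Set ℝ :=
  { r | ∃ (n : ℕ) (As : Fin n → Set T) (Bs : Fin n → Set X),
      (∀ i, As i ∈ 𝒜 ∧ As i ⊆ A ∧ MeasurableSet (Bs i)) ∧
      (Pairwise fun i j => Disjoint (As i ×ˢ Bs i) (As j ×ˢ Bs j)) ∧
      r = ∑ i, |Q₀ (As i) (Bs i)| }

/-- A Borel set is bounded away from zero if it is disjoint from some interval
`(-r, r)`, `r > 0`. -/
def BoundedAwayFromZero (B : Set ℝ) : Prop := ∃ r > 0, ∀ x ∈ B, r ≤ |x|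

/-- A quasi-Lévy type measure, presented as its Jordan pair `(ν⁺, ν⁻)`: two mutually
singular Borel measures on `ℝ` with no mass at `0`, finite on every Borel set bounded
away from `0`, and with `∫ (1 ∧ x²) d(ν⁺ + ν⁻) < ∞`. -/
def IsQuasiLevyPair (νp νm : Measure ℝ) : Prop :=
  νp {0} = 0 ∧ νm {0} = 0 ∧ νp.MutuallySingular νm ∧
  (∀ r : ℝ, 0 < r → νp {x | r ≤ |x|} < ⊤ ∧ νm {x | r ≤ |x|} < ⊤) ∧
  ∫⁻ x, ENNReal.ofReal (min 1 (x ^ 2)) ∂(νp + νm) < ⊤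

/-- `J(A, B) = ∫_B (1 ∧ x²) F_A(dx)` for the quasi-Lévy family `F_A = F_A⁺ - F_A⁻`. -/
noncomputable def Jfun {S : Type*} (Fp Fm : Set S → Measure ℝ) (A : Set S) (B : Set ℝ) : ℝ :=
  (∫⁻ x in B, ENNReal.ofReal (min 1 (x ^ 2)) ∂(Fp A)).toReal -
  (∫⁻ x in B, ENNReal.ofReal (min 1 (x ^ 2)) ∂(Fm A)).toReal

/-- The centering function `τ(x) = x` for `|x| ≤ 1`, `τ(x) = x/|x|` for `|x| > 1`. -/
noncomputable def tauC (x : ℝ) : ℝ := if |x| ≤ 1 then x else x / |x|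

/-- The integrand `e^{iθx} - 1 - iθτ(x)` of the Lévy–Khintchine formula. -/
noncomputable def levyIntegrand (θ x : ℝ) : ℂ :=
  Complex.exp (Complex.I * (θ * x)) - 1 - Complex.I * (θ * tauC x)

/-- The Lévy–Khintchine exponent `iθa - θ²b/2 + ∫ (e^{iθx} - 1 - iθτ(x)) dν` of the
characteristic triplet `(a, b, ν⁺ - ν⁻)`. -/
noncomputable def cfExponent (a b : ℝ) (νp νm : Measure ℝ) (θ : ℝ) : ℂ :=
  Complex.I * (θ * a) - (θ ^ 2 / 2) * b +
    ((∫ x, levyIntegrand θ x ∂νp) - ∫ x, levyIntegrand θ x ∂νm)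

/-- The set of total-variation sums of a set function `μ` over countable partitions of
`A` into members of the δ-ring `𝒮`. -/
def TVSums {S : Type*} (𝒮 : Set (Set S)) (μ : Set S → ℝ) (A : Set S) : Set ℝ :=
  { r | ∃ Pn : ℕ → Set S, (∀ n, Pn n ∈ 𝒮) ∧ Pairwise (Function.onFun Disjoint Pn) ∧
      (⋃ n, Pn n) = A ∧ HasSum (fun n => |μ (Pn n)|) r }

/-- The spectral exponent `K(u,s) = iua(s) - u²σ²(s)/2 + ∫ (e^{iux} - 1 - iuτ(x)) ρ(s,dx)`. -/
noncomputable def Kexp {S : Type*} (a σsq : S → ℝ) (ρp ρm : S → Measure ℝ)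
    (u : ℝ) (s : S) : ℂ :=
  Complex.I * (u * a s) - (u ^ 2 / 2) * σsq s +
    ((∫ x, levyIntegrand u x ∂(ρp s)) - ∫ x, levyIntegrand u x ∂(ρm s))

namespace SpecAux

variable {S : Type*}

lemma dr_empty {𝒮 : Set (Set S)} (h : IsDeltaRing 𝒮) : ∅ ∈ 𝒮 := by
  obtain ⟨A, hA⟩ := h.nonempty
  simpa using h.diff_mem hA hA

lemma dr_inter {𝒮 : Set (Set S)} (h : IsDeltaRing 𝒮) {A B : Set S}
    (hA : A ∈ 𝒮) (hB : B ∈ 𝒮) : A ∩ B ∈ 𝒮 := by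
  have hx : A ∩ B = A \ (A \ B) := by ext x; simp only [mem_inter_iff, mem_diff]; tauto
  rw [hx]; exact h.diff_mem hA (h.diff_mem hA hB)

lemma dr_piSystem {𝒮 : Set (Set S)} (h : IsDeltaRing 𝒮) : IsPiSystem 𝒮 :=
  fun A hA B hB _ => dr_inter h hA hB

lemma dr_iUnion {𝒮 : Set (Set S)} (h : IsDeltaRing 𝒮) {B : ℕ → Set S} {A : Set S}
    (hB : ∀ n, B n ∈ 𝒮) (hA : A ∈ 𝒮) (hsub : ∀ n, B n ⊆ A) : (⋃ n, B n) ∈ 𝒮 := by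
  have h1 : (⋂ n, A \ B n) ∈ 𝒮 := h.iInter_mem _ fun n => h.diff_mem hA (hB n)
  have h2 : (⋃ n, B n) = A \ ⋂ n, A \ B n := by
    ext x
    simp only [mem_iUnion, mem_diff, mem_iInter, not_forall, not_and, not_not]
    constructor
    · rintro ⟨n, hn⟩; exact ⟨hsub n hn, ⟨n, fun _ => hn⟩⟩
    · rintro ⟨hxA, n, hn⟩; exact ⟨n, hn hxA⟩
  rw [h2]; exact h.diff_mem hA h1

lemma dr_measurableSet {𝒮 : Set (Set S)} [mS : MeasurableSpace S]
    (hmS : mS = MeasurableSpace.generateFrom 𝒮) {A : Set S} (hA : A ∈ 𝒮) :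
    MeasurableSet A := by
  rw [hmS]; exact MeasurableSpace.measurableSet_generateFrom hA

lemma dr_inter_mem {𝒮 : Set (Set S)} [mS : MeasurableSpace S] (h : IsDeltaRing 𝒮)
    (hmS : mS = MeasurableSpace.generateFrom 𝒮) {B : Set S} (hB : MeasurableSet B)
    {A : Set S} (hA : A ∈ 𝒮) : B ∩ A ∈ 𝒮 := by
  let m2 : MeasurableSpace S :=
    { MeasurableSet' := fun C => C ∩ A ∈ 𝒮
      measurableSet_empty := by simpa using dr_empty h
      measurableSet_compl := fun C hC => by
        have hx : Cᶜ ∩ A = A \ (C ∩ A) := by ext x; simp; tauto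
        show Cᶜ ∩ A ∈ 𝒮
        rw [hx]; exact h.diff_mem hA hC
      measurableSet_iUnion := fun f hf => by
        show (⋃ n, f n) ∩ A ∈ 𝒮
        rw [iUnion_inter]
        exact dr_iUnion h hf hA fun n => inter_subset_right }
  have hle : MeasurableSpace.generateFrom 𝒮 ≤ m2 :=
    MeasurableSpace.generateFrom_le fun C hC => show C ∩ A ∈ 𝒮 from dr_inter h hC hA
  exact hle _ (hmS ▸ hB)

lemma hasSum_pair (x y : ℝ) :
    HasSum (fun n : ℕ => if n = 0 then x else if n = 1 then y else 0) (x + y) := by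
  have h1 : HasSum (fun n : ℕ => if n = 0 then x else 0) x := hasSum_ite_eq 0 x
  have h2 : HasSum (fun n : ℕ => if n = 1 then y else 0) y := hasSum_ite_eq 1 y
  convert h1.add h2 using 1
  funext n
  by_cases h0 : n = 0 <;> by_cases hn1 : n = 1 <;> simp [h0, hn1]

/-- the canonical two-set partition sequence -/
def pairSeq (P Q : Set S) : ℕ → Set S := fun n => if n = 0 then P else if n = 1 then Q else ∅

lemma pairSeq_mem {𝒮 : Set (Set S)} (h : IsDeltaRing 𝒮) {P Q : Set S}
    (hP : P ∈ 𝒮) (hQ : Q ∈ 𝒮) : ∀ n, pairSeq P Q n ∈ 𝒮 := by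
  intro n
  by_cases h0 : n = 0 <;> by_cases h1 : n = 1 <;> simp [pairSeq, h0, h1, hP, hQ, dr_empty h]

lemma pairSeq_disj {P Q : Set S} (hd : Disjoint P Q) :
    Pairwise (Function.onFun Disjoint (pairSeq P Q)) := by
  intro i j hij
  unfold Function.onFun pairSeq
  by_cases hi0 : i = 0 <;> by_cases hj0 : j = 0 <;> by_cases hi1 : i = 1 <;>
    by_cases hj1 : j = 1 <;>
    simp_all [Set.disjoint_empty, Set.empty_disjoint, hd, hd.symm]

lemma pairSeq_iUnion (P Q : Set S) : (⋃ n, pairSeq P Q n) = P ∪ Q := by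
  apply subset_antisymm
  · refine iUnion_subset fun n => ?_
    by_cases h0 : n = 0 <;> by_cases h1 : n = 1 <;> simp [pairSeq, h0, h1]
  · intro x hx
    rcases hx with hx | hx
    · exact mem_iUnion.2 ⟨0, by simp [pairSeq, hx]⟩
    · exact mem_iUnion.2 ⟨1, by simp [pairSeq, hx]⟩

lemma ssm_union {𝒮 : Set (Set S)} (h : IsDeltaRing 𝒮) {μ : Set S → ℝ}
    (hμ : IsSignedMeasureOn 𝒮 μ) {P Q : Set S} (hP : P ∈ 𝒮) (hQ : Q ∈ 𝒮)
    (hd : Disjoint P Q) : μ (P ∪ Q) = μ P + μ Q := by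
  have hs := hμ.2 (pairSeq P Q) (pairSeq_mem h hP hQ) (pairSeq_disj hd)
    ((pairSeq_iUnion P Q).symm ▸ h.union_mem hP hQ)
  rw [pairSeq_iUnion P Q] at hs
  have hs' : HasSum (fun n : ℕ => if n = 0 then μ P else if n = 1 then μ Q else 0)
      (μ (P ∪ Q)) := by
    convert hs using 1
    funext n
    by_cases h0 : n = 0 <;> by_cases h1 : n = 1 <;> simp [pairSeq, h0, h1, hμ.1]
  exact (hs'.unique (hasSum_pair _ _))


end SpecAux

namespace SpecAux

lemma tauC_measurable : Measurable tauC := by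
  unfold tauC
  exact Measurable.ite (measurableSet_le (measurable_id.abs) measurable_const)
    measurable_id (measurable_id.div measurable_id.abs)

noncomputable def g1 (θ x : ℝ) : ℝ := Real.cos (θ * x) - 1
noncomputable def g2 (θ x : ℝ) : ℝ := Real.sin (θ * x) - θ * tauC x

lemma g1_measurable (θ : ℝ) : Measurable (g1 θ) :=
  (Real.continuous_cos.measurable.comp (measurable_const.mul measurable_id)).sub
    measurable_const

lemma g2_measurable (θ : ℝ) : Measurable (g2 θ) :=
  (Real.continuous_sin.measurable.comp (measurable_const.mul measurable_id)).sub
    (measurable_const.mul tauC_measurable)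

lemma levy_eq (θ x : ℝ) :
    levyIntegrand θ x = (g1 θ x : ℝ) + (g2 θ x : ℝ) * Complex.I := by
  unfold levyIntegrand g1 g2
  have h : Complex.I * ((θ : ℂ) * (x : ℂ)) = ((θ * x : ℝ) : ℂ) * Complex.I := by
    push_cast; ring
  rw [h, Complex.exp_mul_I, ← Complex.ofReal_cos, ← Complex.ofReal_sin]
  push_cast
  ring

lemma exp_I_norm (t : ℝ) : ‖Complex.exp (Complex.I * (t : ℂ))‖ = 1 := by
  have h : Complex.I * (t : ℂ) = (t : ℂ) * Complex.I := by ring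
  rw [h, Complex.norm_exp_ofReal_mul_I]

lemma norm_levyIntegrand_le (θ x : ℝ) :
    ‖levyIntegrand θ x‖ ≤ (2 + |θ|) * (1 + θ ^ 2) * min 1 (x ^ 2) := by
  have hC2 : (2 : ℝ) ≤ (2 + |θ|) * (1 + θ ^ 2) := by nlinarith [abs_nonneg θ, sq_nonneg θ]
  unfold levyIntegrand
  by_cases h1 : |x| ≤ 1
  · have hx2 : x ^ 2 ≤ 1 := by nlinarith [abs_nonneg x, sq_abs x]
    have hmin : min 1 (x ^ 2) = x ^ 2 := min_eq_right hx2
    have htau : tauC x = x := if_pos h1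
    rw [hmin, htau]
    by_cases h2 : |θ * x| ≤ 1
    · have hz : ‖Complex.I * ((θ : ℂ) * (x : ℂ))‖ = |θ * x| := by
        rw [norm_mul, Complex.norm_I, one_mul, ← Complex.ofReal_mul, Complex.norm_real, Real.norm_eq_abs]
      have hb := Complex.exp_bound (x := Complex.I * ((θ : ℂ) * (x : ℂ)))
        (by rw [hz]; exact h2) (n := 2) (by norm_num)
      have hsum : (∑ m ∈ Finset.range 2,
          (Complex.I * ((θ : ℂ) * (x : ℂ))) ^ m / m.factorial)
          = 1 + Complex.I * ((θ : ℂ) * (x : ℂ)) := by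
        simp [Finset.sum_range_succ]
      rw [hsum, hz] at hb
      have heq : Complex.exp (Complex.I * ((θ : ℂ) * (x : ℂ))) - 1 -
          Complex.I * ((θ : ℂ) * (x : ℂ)) =
          Complex.exp (Complex.I * ((θ : ℂ) * (x : ℂ))) -
            (1 + Complex.I * ((θ : ℂ) * (x : ℂ))) := by ring
      rw [heq]
      calc ‖_‖ ≤ |θ * x| ^ 2 * ((3 : ℝ) * ((2).factorial * 2 : ℝ)⁻¹) := hb
        _ ≤ |θ * x| ^ 2 := by
            rw [show ((Nat.factorial 2 : ℝ) * 2 : ℝ)⁻¹ = (4 : ℝ)⁻¹ by norm_num]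
            nlinarith [sq_nonneg (θ * x)]
        _ = θ ^ 2 * x ^ 2 := by rw [sq_abs, mul_pow]
        _ ≤ (2 + |θ|) * (1 + θ ^ 2) * x ^ 2 := by nlinarith [sq_nonneg x, abs_nonneg θ, sq_nonneg θ, sq_nonneg (x*θ)]
    · push_neg at h2
      have hb : ‖Complex.exp (Complex.I * ((θ : ℂ) * (x : ℂ))) - 1 -
          Complex.I * ((θ : ℂ) * (x : ℂ))‖ ≤ 2 + |θ| * |x| := by
        have t1 := norm_sub_le (Complex.exp (Complex.I * ((θ : ℂ) * (x : ℂ))) - 1)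
          (Complex.I * ((θ : ℂ) * (x : ℂ)))
        have t2 := norm_sub_le (Complex.exp (Complex.I * ((θ : ℂ) * (x : ℂ)))) (1 : ℂ)
        have t3 : ‖Complex.I * ((θ : ℂ) * (x : ℂ))‖ = |θ| * |x| := by
          rw [norm_mul, Complex.norm_I, one_mul, norm_mul,
            Complex.norm_real, Complex.norm_real, Real.norm_eq_abs, Real.norm_eq_abs]
        have t4 : ‖Complex.exp (Complex.I * ((θ : ℂ) * (x : ℂ)))‖ = 1 := by
          rw [show ((θ : ℂ) * (x : ℂ)) = ((θ * x : ℝ) : ℂ) by push_cast; ring]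
          exact exp_I_norm (θ * x)
        rw [t3] at t1
        rw [t4] at t2
        simp only [norm_one] at t2
        linarith
      refine hb.trans ?_
      have h5 : 1 < |θ| * |x| := by rwa [← abs_mul]
      have k1 : |θ| * |x| ≤ |θ| := mul_le_of_le_one_right (abs_nonneg θ) h1
      have k2 : 1 < θ ^ 2 * x ^ 2 := by nlinarith [h5, sq_abs x, sq_abs θ]
      have k4 : (2 + |θ|) * 1 ≤ (2 + |θ|) * (θ ^ 2 * x ^ 2) := by
        nlinarith [k2, abs_nonneg θ]
      have k5 : (2 + |θ|) * (θ ^ 2 * x ^ 2) ≤ (2 + |θ|) * (1 + θ ^ 2) * x ^ 2 := by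
        nlinarith [sq_nonneg x, abs_nonneg θ]
      linarith
  · push_neg at h1
    have hmin : min 1 (x ^ 2) = 1 := min_eq_left (by nlinarith [sq_abs x])
    rw [hmin, mul_one]
    have htau : tauC x = x / |x| := if_neg (not_le.2 h1)
    rw [htau]
    have hxne : x ≠ 0 := fun h => by simp [h] at h1; linarith
    have habs : abs (x / abs x) = 1 := by
      rw [abs_div, abs_abs, div_self (abs_ne_zero.2 hxne)]
    have t1 := norm_sub_le (Complex.exp (Complex.I * ((θ : ℂ) * (x : ℂ))) - 1)
      (Complex.I * ((θ : ℂ) * ((x / |x| : ℝ) : ℂ)))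
    have t2 := norm_sub_le (Complex.exp (Complex.I * ((θ : ℂ) * (x : ℂ)))) (1 : ℂ)
    have t3 : ‖Complex.I * ((θ : ℂ) * ((x / |x| : ℝ) : ℂ))‖ = |θ| * abs (x / abs x) := by
      rw [norm_mul, Complex.norm_I, one_mul, norm_mul,
        Complex.norm_real, Complex.norm_real, Real.norm_eq_abs, Real.norm_eq_abs]
    have t4 : ‖Complex.exp (Complex.I * ((θ : ℂ) * (x : ℂ)))‖ = 1 := by
      rw [show ((θ : ℂ) * (x : ℂ)) = ((θ * x : ℝ) : ℂ) by push_cast; ring]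
      exact exp_I_norm (θ * x)
    rw [t3, habs, mul_one] at t1
    rw [t4] at t2
    simp only [norm_one] at t2
    nlinarith [abs_nonneg θ, sq_nonneg θ]


lemma g1_bound (θ x : ℝ) : |g1 θ x| ≤ (2 + |θ|) * (1 + θ ^ 2) * min 1 (x ^ 2) := by
  have h := norm_levyIntegrand_le θ x
  have hre : (levyIntegrand θ x).re = g1 θ x := by rw [levy_eq]; simp
  calc |g1 θ x| = |(levyIntegrand θ x).re| := by rw [hre]
    _ ≤ ‖levyIntegrand θ x‖ := Complex.abs_re_le_norm _
    _ ≤ _ := h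

lemma g2_bound (θ x : ℝ) : |g2 θ x| ≤ (2 + |θ|) * (1 + θ ^ 2) * min 1 (x ^ 2) := by
  have h := norm_levyIntegrand_le θ x
  have him : (levyIntegrand θ x).im = g2 θ x := by rw [levy_eq]; simp
  calc |g2 θ x| = |(levyIntegrand θ x).im| := by rw [him]
    _ ≤ ‖levyIntegrand θ x‖ := Complex.abs_im_le_norm _
    _ ≤ _ := h

lemma Cθ_nonneg (θ : ℝ) : 0 ≤ (2 + |θ|) * (1 + θ ^ 2) := by positivity

lemma measurable_min_sq : Measurable fun x : ℝ => min 1 (x ^ 2) :=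
  measurable_const.min (measurable_id.pow_const 2)

lemma integrable_min_sq {μ : Measure ℝ}
    (hfin : ∫⁻ x, ENNReal.ofReal (min 1 (x ^ 2)) ∂μ < ⊤) :
    Integrable (fun x => min 1 (x ^ 2)) μ := by
  refine ⟨measurable_min_sq.aestronglyMeasurable, ?_⟩
  rw [hasFiniteIntegral_iff_norm]
  refine lt_of_eq_of_lt ?_ hfin
  refine lintegral_congr fun x => ?_
  rw [Real.norm_eq_abs, abs_of_nonneg (le_min zero_le_one (sq_nonneg x))]

lemma integrable_of_bound {μ : Measure ℝ} {g : ℝ → ℝ} {c : ℝ}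
    (hg : Measurable g) (hbd : ∀ x, |g x| ≤ c * min 1 (x ^ 2))
    (hfin : ∫⁻ x, ENNReal.ofReal (min 1 (x ^ 2)) ∂μ < ⊤) : Integrable g μ :=
  Integrable.mono' ((integrable_min_sq hfin).const_mul c) hg.aestronglyMeasurable
    (ae_of_all _ fun x => by rw [Real.norm_eq_abs]; exact hbd x)

lemma integral_min_le {μ : Measure ℝ}
    (hone : ∫⁻ x, ENNReal.ofReal (min 1 (x ^ 2)) ∂μ ≤ 1) :
    ∫ x, min 1 (x ^ 2) ∂μ ≤ 1 := by
  rw [integral_eq_lintegral_of_nonneg_ae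
    (ae_of_all _ fun x => le_min zero_le_one (sq_nonneg x))
    measurable_min_sq.aestronglyMeasurable]
  calc (∫⁻ x, ENNReal.ofReal (min 1 (x ^ 2)) ∂μ).toReal ≤ (1 : ℝ≥0∞).toReal :=
        ENNReal.toReal_mono ENNReal.one_ne_top hone
    _ = 1 := by simp

lemma abs_integral_le_of_bound {μ : Measure ℝ} {g : ℝ → ℝ} {c : ℝ} (hc : 0 ≤ c)
    (hg : Measurable g) (hbd : ∀ x, |g x| ≤ c * min 1 (x ^ 2))
    (hone : ∫⁻ x, ENNReal.ofReal (min 1 (x ^ 2)) ∂μ ≤ 1) :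
    |∫ x, g x ∂μ| ≤ c := by
  have hfin : ∫⁻ x, ENNReal.ofReal (min 1 (x ^ 2)) ∂μ < ⊤ :=
    lt_of_le_of_lt hone (by norm_num)
  have hint := integrable_of_bound hg hbd hfin
  calc |∫ x, g x ∂μ| ≤ ∫ x, |g x| ∂μ := by
        simpa [Real.norm_eq_abs] using norm_integral_le_integral_norm (μ := μ) g
    _ ≤ ∫ x, c * min 1 (x ^ 2) ∂μ :=
        integral_mono hint.abs ((integrable_min_sq hfin).const_mul c) hbd
    _ = c * ∫ x, min 1 (x ^ 2) ∂μ := by rw [integral_const_mul]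
    _ ≤ c * 1 := by
        have := integral_min_le hone
        nlinarith [hc]
    _ = c := mul_one c

lemma lintegral_abs_bound {μ : Measure ℝ} {g : ℝ → ℝ} {c : ℝ} (hc : 0 ≤ c)
    (hbd : ∀ x, |g x| ≤ c * min 1 (x ^ 2)) :
    ∫⁻ x, ENNReal.ofReal |g x| ∂μ ≤
      ENNReal.ofReal c * ∫⁻ x, ENNReal.ofReal (min 1 (x ^ 2)) ∂μ := by
  rw [← lintegral_const_mul _ (measurable_min_sq.ennreal_ofReal)]
  refine lintegral_mono fun x => ?_
  rw [← ENNReal.ofReal_mul hc]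
  exact ENNReal.ofReal_le_ofReal (hbd x)

lemma measurable_integral_kernel {S : Type*} [MeasurableSpace S] {ρ : S → Measure ℝ}
    (hρ : ∀ B : Set ℝ, MeasurableSet B → Measurable fun s => ρ s B) {g : ℝ → ℝ}
    (hg : Measurable g) (hint : ∀ s, Integrable g (ρ s)) :
    Measurable fun s => ∫ x, g x ∂ρ s := by
  have hρm : Measurable ρ := Measure.measurable_of_measurable_coe ρ hρ
  have h1 : Measurable fun s => ∫⁻ x, ENNReal.ofReal (g x) ∂ρ s :=
    (Measure.measurable_lintegral hg.ennreal_ofReal).comp hρm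
  have h2 : Measurable fun s => ∫⁻ x, ENNReal.ofReal (-g x) ∂ρ s :=
    (Measure.measurable_lintegral hg.neg.ennreal_ofReal).comp hρm
  have he : (fun s => ∫ x, g x ∂ρ s) = fun s =>
      (∫⁻ x, ENNReal.ofReal (g x) ∂ρ s).toReal -
        (∫⁻ x, ENNReal.ofReal (-g x) ∂ρ s).toReal :=
    funext fun s => integral_eq_lintegral_pos_part_sub_lintegral_neg_part (hint s)
  rw [he]
  exact h1.ennreal_toReal.sub h2.ennreal_toReal

lemma integral_levy_decomp {μ : Measure ℝ} (θ : ℝ)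
    (h1 : Integrable (g1 θ) μ) (h2 : Integrable (g2 θ) μ) :
    ∫ x, levyIntegrand θ x ∂μ =
      ((∫ x, g1 θ x ∂μ : ℝ) : ℂ) + ((∫ x, g2 θ x ∂μ : ℝ) : ℂ) * Complex.I := by
  have he : (fun x => levyIntegrand θ x) =
      fun x => (g1 θ x) • (1 : ℂ) + (g2 θ x) • Complex.I := by
    funext x
    rw [levy_eq, Complex.real_smul, Complex.real_smul, mul_one]
  have hI1 : Integrable (fun x => (g1 θ x) • (1 : ℂ)) μ := h1.smul_const (1 : ℂ)
  have hI2 : Integrable (fun x => (g2 θ x) • Complex.I) μ := h2.smul_const Complex.I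
  rw [he, integral_add hI1 hI2, integral_smul_const, integral_smul_const,
    Complex.real_smul, Complex.real_smul, mul_one]


end SpecAux


namespace SpecAux

lemma setLintegral_iUnion_le {S : Type*} [MeasurableSpace S] {μ : Measure S}
    {g : S → ℝ≥0∞} (hg : Measurable g) {B : ℕ → Set S} (hmono : Monotone B)
    (hBm : ∀ n, MeasurableSet (B n)) {c : ℝ≥0∞}
    (hb : ∀ n, ∫⁻ s in B n, g s ∂μ ≤ c) : ∫⁻ s in ⋃ n, B n, g s ∂μ ≤ c := by
  have h2 : (μ.withDensity g) (⋃ n, B n) = ⨆ n, (μ.withDensity g) (B n) :=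
    hmono.measure_iUnion
  rw [← withDensity_apply g (MeasurableSet.iUnion hBm), h2]
  exact iSup_le fun n => ((withDensity_apply g (hBm n)).le).trans (hb n)

lemma exists_bound_on_subsets {S : Type*} [mS : MeasurableSpace S] {𝒮 : Set (Set S)}
    (h𝒮 : IsDeltaRing 𝒮) (hmS : mS = MeasurableSpace.generateFrom 𝒮)
    {ν₀ : Set S → ℝ} (hν₀ : IsSignedMeasureOn 𝒮 ν₀) {A : Set S} (hA : A ∈ 𝒮) :
    ∃ M : ℝ, 0 ≤ M ∧ ∀ C : Set S, MeasurableSet C → |ν₀ (C ∩ A)| ≤ M := by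
  classical
  let v : SignedMeasure S :=
    { measureOf' := fun B => if MeasurableSet B then ν₀ (B ∩ A) else 0
      empty' := by simp [hν₀.1]
      not_measurable' := fun B hB => if_neg hB
      m_iUnion' := by
        intro f hf hd
        have hmem : ∀ n, f n ∩ A ∈ 𝒮 := fun n => dr_inter_mem h𝒮 hmS (hf n) hA
        have hdis : Pairwise (Function.onFun Disjoint fun n => f n ∩ A) :=
          hd.mono fun i j h => h.mono inter_subset_left inter_subset_left
        have hUnion : (⋃ n, f n ∩ A) ∈ 𝒮 :=
          dr_iUnion h𝒮 hmem hA fun n => inter_subset_right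
        have hs := hν₀.2 _ hmem hdis hUnion
        have he : (⋃ n, f n ∩ A) = (⋃ n, f n) ∩ A := by rw [iUnion_inter]
        rw [he] at hs
        convert hs using 1
        · funext n; exact if_pos (hf n)
        · exact if_pos (MeasurableSet.iUnion hf) }
  set j := v.toJordanDecomposition with hj
  refine ⟨(j.posPart univ).toReal + (j.negPart univ).toReal,
    by positivity, fun C hC => ?_⟩
  have hv : ν₀ (C ∩ A) = v C := (if_pos hC).symm
  have hvj : v C = (j.posPart C).toReal - (j.negPart C).toReal := by
    conv_lhs => rw [← v.toSignedMeasure_toJordanDecomposition]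
    rw [JordanDecomposition.toSignedMeasure, VectorMeasure.sub_apply,
      Measure.toSignedMeasure_apply_measurable hC,
      Measure.toSignedMeasure_apply_measurable hC]
    simp only [measureReal_def, hj]
  have hples : (j.posPart C).toReal ≤ (j.posPart univ).toReal :=
    ENNReal.toReal_mono (measure_ne_top _ _) (measure_mono (subset_univ C))
  have hmles : (j.negPart C).toReal ≤ (j.negPart univ).toReal :=
    ENNReal.toReal_mono (measure_ne_top _ _) (measure_mono (subset_univ C))
  rw [hv, hvj, abs_le]
  constructor
  · have := ENNReal.toReal_nonneg (a := j.posPart C)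
    linarith
  · have := ENNReal.toReal_nonneg (a := j.negPart C)
    linarith

end SpecAux

/-- Spectral representation of the characteristic function of a QID
random measure: `E[e^{iθΛ(A)}] = exp (∫_A K(θ,s) λ(ds))` for all `A ∈ 𝒮`, and
`|a(s)| + σ²(s) + (dν/dλ)(s) = 1` for λ-a.e. `s`. -/
theorem spectral_representation {S Ω : Type*} [Nonempty S]
    [mS : MeasurableSpace S] [MeasurableSpace Ω]
    (𝒮 : Set (Set S)) (h𝒮 : IsDeltaRing 𝒮)
    (hmS : mS = MeasurableSpace.generateFrom 𝒮)
    (Sseq : ℕ → Set S) (hSmem : ∀ n, Sseq n ∈ 𝒮) (hSmono : Monotone Sseq)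
    (hScover : ⋃ n, Sseq n = univ)
    (ν₀ : Set S → ℝ) (hν₀ : IsSignedMeasureOn 𝒮 ν₀)
    (ν₁ : Set S → ℝ) (hν₁pos : ∀ A ∈ 𝒮, 0 ≤ ν₁ A) (hν₁ : IsSignedMeasureOn 𝒮 ν₁)
    (Fp Fm : Set S → Measure ℝ)
    (hql : ∀ A ∈ 𝒮, IsQuasiLevyPair (Fp A) (Fm A))
    (hsigned : ∀ B : Set ℝ, MeasurableSet B → BoundedAwayFromZero B →
      IsSignedMeasureOn 𝒮 fun A => (Fp A B).toReal - (Fm A B).toReal)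
    (hstar : ∀ A ∈ 𝒮, BddAbove (RectSums 𝒮 (Jfun Fp Fm) A))
    -- the control measure
    (lam : Measure S)
    (hlam : ∀ A ∈ 𝒮, lam A = ENNReal.ofReal
      (sSup (TVSums 𝒮 ν₀ A) + ν₁ A + sSup (RectSums 𝒮 (Jfun Fp Fm) A)))
    -- the Radon–Nikodym derivatives of `ν₀`, `ν₁` and `ν` with respect to `λ`
    (a σsq dν : S → ℝ)
    (hameas : Measurable a) (hσmeas : Measurable σsq) (hdνmeas : Measurable dν)
    (haRN : ∀ A ∈ 𝒮, ν₀ A = ∫ s in A, a s ∂lam)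
    (hσRN : ∀ A ∈ 𝒮, ν₁ A = ∫ s in A, σsq s ∂lam)
    (hdνRN : ∀ A ∈ 𝒮, sSup (RectSums 𝒮 (Jfun Fp Fm) A) = ∫ s in A, dν s ∂lam)
    -- the disintegrating kernels of `F`
    (ρp ρm : S → Measure ℝ)
    (hρsing : ∀ s, (ρp s).MutuallySingular (ρm s))
    (hρ0 : ∀ s, ρp s {0} = 0 ∧ ρm s {0} = 0)
    (hρbdd : ∀ s, (∫⁻ x, ENNReal.ofReal (min 1 (x ^ 2)) ∂(ρp s)) ≤ 1 ∧
      (∫⁻ x, ENNReal.ofReal (min 1 (x ^ 2)) ∂(ρm s)) ≤ 1)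
    (hρpmeas : ∀ B : Set ℝ, MeasurableSet B → Measurable fun s => ρp s B)
    (hρmmeas : ∀ B : Set ℝ, MeasurableSet B → Measurable fun s => ρm s B)
    (hdis : ∀ A ∈ 𝒮, ∀ g : ℝ → ℝ, Measurable g →
      (∫⁻ s in A, (∫⁻ x, ENNReal.ofReal |g x| ∂(ρp s + ρm s)) ∂lam) < ⊤ →
      (∫ x, g x ∂(Fp A)) - (∫ x, g x ∂(Fm A)) =
        ∫ s in A, ((∫ x, g x ∂(ρp s)) - ∫ x, g x ∂(ρm s)) ∂lam)
    -- the QID random measure with these characteristic triplets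
    (P : Measure Ω) (hP : IsProbabilityMeasure P)
    (Λ : Set S → Ω → ℝ) (hΛmeas : ∀ A ∈ 𝒮, Measurable (Λ A))
    (hCF : ∀ A ∈ 𝒮, ∀ θ : ℝ,
      (∫ ω, Complex.exp (Complex.I * (θ * Λ A ω)) ∂P) =
        Complex.exp (cfExponent (ν₀ A) (ν₁ A) (Fp A) (Fm A) θ)) :
    (∀ A ∈ 𝒮, ∀ θ : ℝ,
      (∫ ω, Complex.exp (Complex.I * (θ * Λ A ω)) ∂P) =
        Complex.exp (∫ s in A, Kexp a σsq ρp ρm θ s ∂lam)) ∧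
    (∀ᵐ s ∂lam, |a s| + σsq s + dν s = 1) := by
  classical
  have hES : ∅ ∈ 𝒮 := SpecAux.dr_empty h𝒮
  have hmeasS : ∀ {A : Set S}, A ∈ 𝒮 → MeasurableSet A :=
    fun {A} hA => SpecAux.dr_measurableSet hmS hA
  have hint𝒮 : ∀ {B A : Set S}, MeasurableSet B → A ∈ 𝒮 → B ∩ A ∈ 𝒮 :=
    fun {B A} hB hA => SpecAux.dr_inter_mem h𝒮 hmS hB hA
  have hlamfin : ∀ {A : Set S}, A ∈ 𝒮 → lam A < ⊤ := fun {A} hA => by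
    rw [hlam A hA]; exact ENNReal.ofReal_lt_top
  -- bounded measurable functions are integrable on members of 𝒮
  have hbddint : ∀ (g : S → ℝ), Measurable g → ∀ {E : Set S}, E ∈ 𝒮 →
      ∀ c : ℝ, (∀ s ∈ E, |g s| ≤ c) → IntegrableOn g E lam := by
    intro g hg E hE c hc
    exact Measure.integrableOn_of_bounded (hlamfin hE).ne hg.aestronglyMeasurable
      ((ae_restrict_mem (hmeasS hE)).mono fun s hs => by
        rw [Real.norm_eq_abs]; exact hc s hs)
  -- 0 belongs to every rectangle-sum set
  have hR0mem : ∀ A : Set S, (0 : ℝ) ∈ RectSums 𝒮 (Jfun Fp Fm) A := fun A =>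
    ⟨0, fun i => i.elim0, fun i => i.elim0, fun i => i.elim0, fun i j _ => i.elim0, by simp⟩
  -- nonnegativity of set integrals of σsq and dν over 𝒮-sets
  have hσpos : ∀ C ∈ 𝒮, 0 ≤ ∫ s in C, σsq s ∂lam := by
    intro C hC; rw [← hσRN C hC]; exact hν₁pos C hC
  have hdνpos : ∀ C ∈ 𝒮, 0 ≤ ∫ s in C, dν s ∂lam := by
    intro C hC; rw [← hdνRN C hC]
    exact le_csSup (hstar C hC) (hR0mem C)
  -- pointwise a.e. nonnegativity on 𝒮-sets, given integrability
  have hgen_nonneg : ∀ (g : S → ℝ), (∀ C ∈ 𝒮, 0 ≤ ∫ s in C, g s ∂lam) →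
      ∀ {E : Set S}, E ∈ 𝒮 → IntegrableOn g E lam → 0 ≤ᵐ[lam.restrict E] g := by
    intro g hpos E hE hintg
    refine ae_nonneg_of_forall_setIntegral_nonneg hintg fun t ht hfin => ?_
    rw [Measure.restrict_restrict ht]
    exact hpos (t ∩ E) (hint𝒮 ht hE)
  -- integrability of a on every member of 𝒮
  have haint : ∀ {A : Set S}, A ∈ 𝒮 → IntegrableOn a A lam := by
    intro A hA
    obtain ⟨M, hM0, hM⟩ := SpecAux.exists_bound_on_subsets h𝒮 hmS hν₀ hA
    set B : ℕ → Set S := fun n => {s | |a s| ≤ n} ∩ A with hBdef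
    have hBs : ∀ n, MeasurableSet {s | |a s| ≤ (n : ℝ)} :=
      fun n => measurableSet_le hameas.abs measurable_const
    have hBmeas : ∀ n, MeasurableSet (B n) := fun n => (hBs n).inter (hmeasS hA)
    have hBS : ∀ n, B n ∈ 𝒮 := fun n => hint𝒮 (hBs n) hA
    have hBmono : Monotone B := fun m n hmn =>
      inter_subset_inter_left _ fun s hs =>
        le_trans (show |a s| ≤ (m : ℝ) from hs) (Nat.cast_le.2 hmn)
    have hBunion : (⋃ n, B n) = A := by
      apply subset_antisymm (iUnion_subset fun n => inter_subset_right)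
      intro s hs
      obtain ⟨n, hn⟩ := exists_nat_ge |a s|
      exact mem_iUnion.2 ⟨n, ⟨hn, hs⟩⟩
    have hBint : ∀ n, IntegrableOn a (B n) lam :=
      fun n => hbddint a hameas (hBS n) n fun s hs => hs.1
    have hkey : ∀ n, ∫⁻ s in B n, ENNReal.ofReal |a s| ∂lam ≤ ENNReal.ofReal (M + M) := by
      intro n
      set P : Set S := ({s | 0 ≤ a s} ∩ {s | |a s| ≤ (n : ℝ)}) ∩ A with hPdef
      set N : Set S := ({s | a s < 0} ∩ {s | |a s| ≤ (n : ℝ)}) ∩ A with hNdef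
      have hPm : MeasurableSet ({s | 0 ≤ a s} ∩ {s | |a s| ≤ (n : ℝ)}) :=
        (measurableSet_le measurable_const hameas).inter (hBs n)
      have hNm : MeasurableSet ({s | a s < 0} ∩ {s | |a s| ≤ (n : ℝ)}) :=
        (measurableSet_lt hameas measurable_const).inter (hBs n)
      have hPS : P ∈ 𝒮 := hint𝒮 hPm hA
      have hNS : N ∈ 𝒮 := hint𝒮 hNm hA
      have hPsub : P ⊆ B n := fun s hs => ⟨hs.1.2, hs.2⟩
      have hNsub : N ⊆ B n := fun s hs => ⟨hs.1.2, hs.2⟩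
      have hPint : IntegrableOn a P lam := (hBint n).mono_set hPsub
      have hNint : IntegrableOn a N lam := (hBint n).mono_set hNsub
      have hdisj : Disjoint P N := by
        refine Set.disjoint_left.2 fun s hsP hsN => ?_
        exact absurd (show (0:ℝ) ≤ a s from hsP.1.1) (not_le.2 (show a s < 0 from hsN.1.1))
      have hPN : P ∪ N = B n := by
        ext s
        simp only [hPdef, hNdef, hBdef, mem_union, mem_inter_iff, mem_setOf_eq]
        constructor
        · rintro (⟨⟨h1, h2⟩, h3⟩ | ⟨⟨h1, h2⟩, h3⟩) <;> exact ⟨h2, h3⟩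
        · rintro ⟨h1, h2⟩
          rcases le_or_gt 0 (a s) with h | h
          · exact Or.inl ⟨⟨h, h1⟩, h2⟩
          · exact Or.inr ⟨⟨h, h1⟩, h2⟩
      have h1 : ∫ s in P, |a s| ∂lam = ν₀ P := by
        rw [haRN P hPS]
        refine setIntegral_congr_fun (hmeasS hPS) fun s hs => abs_of_nonneg hs.1.1
      have h2 : ∫ s in N, |a s| ∂lam = -ν₀ N := by
        rw [haRN N hNS, ← integral_neg]
        refine setIntegral_congr_fun (hmeasS hNS) fun s hs => abs_of_neg hs.1.1
      have hsum : ∫ s in B n, |a s| ∂lam ≤ M + M := by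
        rw [← hPN, setIntegral_union hdisj (hmeasS hNS) hPint.abs hNint.abs, h1, h2]
        have hb1 : |ν₀ P| ≤ M := hM _ hPm
        have hb2 : |ν₀ N| ≤ M := hM _ hNm
        have := abs_le.1 hb1
        have := abs_le.1 hb2
        linarith [(abs_le.1 hb1).1, (abs_le.1 hb1).2, (abs_le.1 hb2).1, (abs_le.1 hb2).2]
      rw [← ofReal_integral_eq_lintegral_ofReal (hBint n).abs
        (ae_of_all _ fun s => abs_nonneg (a s))]
      exact ENNReal.ofReal_le_ofReal hsum
    have hfin := SpecAux.setLintegral_iUnion_le hameas.abs.ennreal_ofReal hBmono hBmeas hkey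
    rw [hBunion] at hfin
    refine ⟨hameas.aestronglyMeasurable, ?_⟩
    rw [hasFiniteIntegral_iff_norm]
    have heq : ∫⁻ s in A, ENNReal.ofReal ‖a s‖ ∂lam
        = ∫⁻ s in A, ENNReal.ofReal |a s| ∂lam :=
      lintegral_congr fun s => by rw [Real.norm_eq_abs]
    rw [heq]
    exact lt_of_le_of_lt hfin ENNReal.ofReal_lt_top
  -- ν₁ is monotone on 𝒮
  have hν₁mono : ∀ {C A : Set S}, C ∈ 𝒮 → A ∈ 𝒮 → C ⊆ A → ν₁ C ≤ ν₁ A := by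
    intro C A hC hA hCA
    have hd : A \ C ∈ 𝒮 := h𝒮.diff_mem hA hC
    have hu : C ∪ (A \ C) = A := union_diff_cancel hCA
    have hadd := SpecAux.ssm_union h𝒮 hν₁ hC hd disjoint_sdiff_right
    rw [hu] at hadd
    have hpos := hν₁pos (A \ C) hd
    linarith
  -- integrability of σsq on every member of 𝒮
  have hσint : ∀ {A : Set S}, A ∈ 𝒮 → IntegrableOn σsq A lam := by
    intro A hA
    set B : ℕ → Set S := fun n => {s | |σsq s| ≤ n} ∩ A with hBdef
    have hBs : ∀ n, MeasurableSet {s | |σsq s| ≤ (n : ℝ)} :=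
      fun n => measurableSet_le hσmeas.abs measurable_const
    have hBmeas : ∀ n, MeasurableSet (B n) := fun n => (hBs n).inter (hmeasS hA)
    have hBS : ∀ n, B n ∈ 𝒮 := fun n => hint𝒮 (hBs n) hA
    have hBmono : Monotone B := fun m n hmn =>
      inter_subset_inter_left _ fun s hs =>
        le_trans (show |σsq s| ≤ (m : ℝ) from hs) (Nat.cast_le.2 hmn)
    have hBunion : (⋃ n, B n) = A := by
      apply subset_antisymm (iUnion_subset fun n => inter_subset_right)
      intro s hs
      obtain ⟨n, hn⟩ := exists_nat_ge |σsq s|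
      exact mem_iUnion.2 ⟨n, ⟨hn, hs⟩⟩
    have hBint : ∀ n, IntegrableOn σsq (B n) lam :=
      fun n => hbddint σsq hσmeas (hBS n) n fun s hs => hs.1
    have hkey : ∀ n, ∫⁻ s in B n, ENNReal.ofReal |σsq s| ∂lam
        ≤ ENNReal.ofReal (ν₁ A) := by
      intro n
      have hnn : 0 ≤ᵐ[lam.restrict (B n)] σsq :=
        hgen_nonneg σsq hσpos (hBS n) (hBint n)
      have habs : ∫ s in B n, |σsq s| ∂lam = ∫ s in B n, σsq s ∂lam :=
        integral_congr_ae (hnn.mono fun s hs => abs_of_nonneg hs)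
      rw [← ofReal_integral_eq_lintegral_ofReal (hBint n).abs
        (ae_of_all _ fun s => abs_nonneg (σsq s)), habs, ← hσRN (B n) (hBS n)]
      exact ENNReal.ofReal_le_ofReal (hν₁mono (hBS n) hA inter_subset_right)
    have hfin := SpecAux.setLintegral_iUnion_le hσmeas.abs.ennreal_ofReal hBmono hBmeas hkey
    rw [hBunion] at hfin
    refine ⟨hσmeas.aestronglyMeasurable, ?_⟩
    rw [hasFiniteIntegral_iff_norm]
    have heq : ∫⁻ s in A, ENNReal.ofReal ‖σsq s‖ ∂lam
        = ∫⁻ s in A, ENNReal.ofReal |σsq s| ∂lam :=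
      lintegral_congr fun s => by rw [Real.norm_eq_abs]
    rw [heq]
    exact lt_of_le_of_lt hfin ENNReal.ofReal_lt_top
  -- kernel integrals are finite
  have hρplt : ∀ s, ∫⁻ x, ENNReal.ofReal (min 1 (x ^ 2)) ∂(ρp s) < ⊤ :=
    fun s => lt_of_le_of_lt (hρbdd s).1 ENNReal.one_lt_top
  have hρmlt : ∀ s, ∫⁻ x, ENNReal.ofReal (min 1 (x ^ 2)) ∂(ρm s) < ⊤ :=
    fun s => lt_of_le_of_lt (hρbdd s).2 ENNReal.one_lt_top
  -- PART 1
  have part1 : ∀ A ∈ 𝒮, ∀ θ : ℝ,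
      (∫ ω, Complex.exp (Complex.I * (θ * Λ A ω)) ∂P) =
        Complex.exp (∫ s in A, Kexp a σsq ρp ρm θ s ∂lam) := by
    intro A hA θ
    rw [hCF A hA θ]
    congr 1
    have hCθ0 : 0 ≤ (2 + |θ|) * (1 + θ ^ 2) := SpecAux.Cθ_nonneg θ
    set Cθ : ℝ := (2 + |θ|) * (1 + θ ^ 2) with hCθdef
    -- integrability of g1, g2 with respect to the kernels
    have hg1ρp : ∀ s, Integrable (SpecAux.g1 θ) (ρp s) := fun s =>
      SpecAux.integrable_of_bound (SpecAux.g1_measurable θ) (SpecAux.g1_bound θ) (hρplt s)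
    have hg1ρm : ∀ s, Integrable (SpecAux.g1 θ) (ρm s) := fun s =>
      SpecAux.integrable_of_bound (SpecAux.g1_measurable θ) (SpecAux.g1_bound θ) (hρmlt s)
    have hg2ρp : ∀ s, Integrable (SpecAux.g2 θ) (ρp s) := fun s =>
      SpecAux.integrable_of_bound (SpecAux.g2_measurable θ) (SpecAux.g2_bound θ) (hρplt s)
    have hg2ρm : ∀ s, Integrable (SpecAux.g2 θ) (ρm s) := fun s =>
      SpecAux.integrable_of_bound (SpecAux.g2_measurable θ) (SpecAux.g2_bound θ) (hρmlt s)
    -- the two kernel integral functions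
    set u1 : S → ℝ := fun s => (∫ x, SpecAux.g1 θ x ∂ρp s) - ∫ x, SpecAux.g1 θ x ∂ρm s
      with hu1def
    set u2 : S → ℝ := fun s => (∫ x, SpecAux.g2 θ x ∂ρp s) - ∫ x, SpecAux.g2 θ x ∂ρm s
      with hu2def
    have hu1meas : Measurable u1 :=
      (SpecAux.measurable_integral_kernel hρpmeas (SpecAux.g1_measurable θ) hg1ρp).sub
        (SpecAux.measurable_integral_kernel hρmmeas (SpecAux.g1_measurable θ) hg1ρm)
    have hu2meas : Measurable u2 :=
      (SpecAux.measurable_integral_kernel hρpmeas (SpecAux.g2_measurable θ) hg2ρp).sub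
        (SpecAux.measurable_integral_kernel hρmmeas (SpecAux.g2_measurable θ) hg2ρm)
    have hu1bdd : ∀ s, |u1 s| ≤ Cθ + Cθ := by
      intro s
      have h1 := SpecAux.abs_integral_le_of_bound hCθ0 (SpecAux.g1_measurable θ)
        (SpecAux.g1_bound θ) (hρbdd s).1
      have h2 := SpecAux.abs_integral_le_of_bound hCθ0 (SpecAux.g1_measurable θ)
        (SpecAux.g1_bound θ) (hρbdd s).2
      calc |u1 s| ≤ |∫ x, SpecAux.g1 θ x ∂ρp s| + |∫ x, SpecAux.g1 θ x ∂ρm s| :=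
            abs_sub _ _
        _ ≤ Cθ + Cθ := add_le_add h1 h2
    have hu2bdd : ∀ s, |u2 s| ≤ Cθ + Cθ := by
      intro s
      have h1 := SpecAux.abs_integral_le_of_bound hCθ0 (SpecAux.g2_measurable θ)
        (SpecAux.g2_bound θ) (hρbdd s).1
      have h2 := SpecAux.abs_integral_le_of_bound hCθ0 (SpecAux.g2_measurable θ)
        (SpecAux.g2_bound θ) (hρbdd s).2
      calc |u2 s| ≤ |∫ x, SpecAux.g2 θ x ∂ρp s| + |∫ x, SpecAux.g2 θ x ∂ρm s| :=
            abs_sub _ _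
        _ ≤ Cθ + Cθ := add_le_add h1 h2
    -- pointwise decomposition of Kexp
    have hKpt : (fun s => Kexp a σsq ρp ρm θ s) = fun s =>
        ((a s) • (Complex.I * (θ : ℂ)) + (σsq s) • (-(((θ : ℂ)) ^ 2 / 2))) +
          ((u1 s) • (1 : ℂ) + (u2 s) • Complex.I) := by
      funext s
      unfold Kexp
      rw [SpecAux.integral_levy_decomp θ (hg1ρp s) (hg2ρp s),
        SpecAux.integral_levy_decomp θ (hg1ρm s) (hg2ρm s)]
      simp only [Complex.real_smul, hu1def, hu2def]
      push_cast
      ring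
    -- integrabilities on A
    have hu1int : IntegrableOn u1 A lam :=
      hbddint u1 hu1meas hA (Cθ + Cθ) fun s _ => hu1bdd s
    have hu2int : IntegrableOn u2 A lam :=
      hbddint u2 hu2meas hA (Cθ + Cθ) fun s _ => hu2bdd s
    have hI1 : IntegrableOn (fun s => (a s) • (Complex.I * (θ : ℂ))) A lam :=
      (haint hA).smul_const _
    have hI2 : IntegrableOn (fun s => (σsq s) • (-(((θ : ℂ)) ^ 2 / 2))) A lam :=
      (hσint hA).smul_const _
    have hI3 : IntegrableOn (fun s => (u1 s) • (1 : ℂ)) A lam := hu1int.smul_const _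
    have hI4 : IntegrableOn (fun s => (u2 s) • Complex.I) A lam := hu2int.smul_const _
    have hI12 : IntegrableOn (fun s => (a s) • (Complex.I * (θ : ℂ)) +
        (σsq s) • (-(((θ : ℂ)) ^ 2 / 2))) A lam := hI1.add hI2
    have hI34 : IntegrableOn (fun s => (u1 s) • (1 : ℂ) + (u2 s) • Complex.I) A lam :=
      hI3.add hI4
    rw [hKpt, integral_add hI12 hI34, integral_add hI1 hI2,
      integral_add hI3 hI4, integral_smul_const, integral_smul_const,
      integral_smul_const, integral_smul_const]
    -- left-hand side: decompose cfExponent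
    obtain ⟨hq1, hq2, hq3, hq4, hqlA⟩ := hql A hA
    rw [lintegral_add_measure] at hqlA
    have hfinFp : ∫⁻ x, ENNReal.ofReal (min 1 (x ^ 2)) ∂(Fp A) < ⊤ :=
      lt_of_le_of_lt le_self_add hqlA
    have hfinFm : ∫⁻ x, ENNReal.ofReal (min 1 (x ^ 2)) ∂(Fm A) < ⊤ :=
      lt_of_le_of_lt le_add_self hqlA
    have hg1Fp : Integrable (SpecAux.g1 θ) (Fp A) :=
      SpecAux.integrable_of_bound (SpecAux.g1_measurable θ) (SpecAux.g1_bound θ) hfinFp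
    have hg1Fm : Integrable (SpecAux.g1 θ) (Fm A) :=
      SpecAux.integrable_of_bound (SpecAux.g1_measurable θ) (SpecAux.g1_bound θ) hfinFm
    have hg2Fp : Integrable (SpecAux.g2 θ) (Fp A) :=
      SpecAux.integrable_of_bound (SpecAux.g2_measurable θ) (SpecAux.g2_bound θ) hfinFp
    have hg2Fm : Integrable (SpecAux.g2 θ) (Fm A) :=
      SpecAux.integrable_of_bound (SpecAux.g2_measurable θ) (SpecAux.g2_bound θ) hfinFm
    -- apply the disintegration identity
    have hdisfin : ∀ g : ℝ → ℝ, (∀ x, |g x| ≤ Cθ * min 1 (x ^ 2)) →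
        (∫⁻ s in A, (∫⁻ x, ENNReal.ofReal |g x| ∂(ρp s + ρm s)) ∂lam) < ⊤ := by
      intro g hb
      have hbnd : ∀ s : S, (∫⁻ x, ENNReal.ofReal |g x| ∂(ρp s + ρm s))
          ≤ ENNReal.ofReal Cθ * 2 := by
        intro s
        rw [lintegral_add_measure]
        have h1 := (SpecAux.lintegral_abs_bound (μ := ρp s) hCθ0 hb).trans
          (mul_le_mul_right (hρbdd s).1 _)
        have h2 := (SpecAux.lintegral_abs_bound (μ := ρm s) hCθ0 hb).trans
          (mul_le_mul_right (hρbdd s).2 _)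
        calc (∫⁻ x, ENNReal.ofReal |g x| ∂ρp s) + ∫⁻ x, ENNReal.ofReal |g x| ∂ρm s
            ≤ ENNReal.ofReal Cθ * 1 + ENNReal.ofReal Cθ * 1 := add_le_add h1 h2
          _ = ENNReal.ofReal Cθ * 2 := by ring
      calc (∫⁻ s in A, (∫⁻ x, ENNReal.ofReal |g x| ∂(ρp s + ρm s)) ∂lam)
          ≤ ∫⁻ _ in A, (ENNReal.ofReal Cθ * 2) ∂lam :=
            lintegral_mono fun s => hbnd s
        _ = (ENNReal.ofReal Cθ * 2) * lam A := setLIntegral_const A _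
        _ < ⊤ := ENNReal.mul_lt_top
            (ENNReal.mul_lt_top ENNReal.ofReal_lt_top (by norm_num)) (hlamfin hA)
    have hd1 : (∫ x, SpecAux.g1 θ x ∂(Fp A)) - (∫ x, SpecAux.g1 θ x ∂(Fm A))
        = ∫ s in A, u1 s ∂lam :=
      hdis A hA (SpecAux.g1 θ) (SpecAux.g1_measurable θ)
        (hdisfin (SpecAux.g1 θ) (SpecAux.g1_bound θ))
    have hd2 : (∫ x, SpecAux.g2 θ x ∂(Fp A)) - (∫ x, SpecAux.g2 θ x ∂(Fm A))
        = ∫ s in A, u2 s ∂lam :=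
      hdis A hA (SpecAux.g2 θ) (SpecAux.g2_measurable θ)
        (hdisfin (SpecAux.g2 θ) (SpecAux.g2_bound θ))
    simp only [cfExponent]
    rw [SpecAux.integral_levy_decomp θ hg1Fp hg2Fp,
      SpecAux.integral_levy_decomp θ hg1Fm hg2Fm, haRN A hA, hσRN A hA]
    have hc1 : ((∫ s in A, u1 s ∂lam : ℝ) : ℂ)
        = ((∫ x, SpecAux.g1 θ x ∂(Fp A) : ℝ) : ℂ) - ((∫ x, SpecAux.g1 θ x ∂(Fm A) : ℝ) : ℂ) := by
      rw [← hd1]; push_cast; ring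
    have hc2 : ((∫ s in A, u2 s ∂lam : ℝ) : ℂ)
        = ((∫ x, SpecAux.g2 θ x ∂(Fp A) : ℝ) : ℂ) - ((∫ x, SpecAux.g2 θ x ∂(Fm A) : ℝ) : ℂ) := by
      rw [← hd2]; push_cast; ring
    simp only [Complex.real_smul]
    rw [hc1, hc2]
    ring
  -- PART 2
  set f : S → ℝ := fun s => |a s| + σsq s + dν s with hfdef
  set g : S → ℝ≥0∞ := fun s => ENNReal.ofReal (f s) with hgdef
  have hfmeas : Measurable f := (hameas.abs.add hσmeas).add hdνmeas
  have hgmeas : Measurable g := hfmeas.ennreal_ofReal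
  -- the density identity on truncated sets
  have hEmeas : ∀ n : ℕ, MeasurableSet
      {s : S | |a s| ≤ (n : ℝ) ∧ |σsq s| ≤ (n : ℝ) ∧ |dν s| ≤ (n : ℝ)} := by
    intro n
    simp only [setOf_and]
    exact (measurableSet_le hameas.abs measurable_const).inter
      ((measurableSet_le hσmeas.abs measurable_const).inter
        (measurableSet_le hdνmeas.abs measurable_const))
  have hWD : lam = lam.withDensity g := by
    refine Measure.ext_of_generateFrom_of_iUnion 𝒮 Sseq hmS (SpecAux.dr_piSystem h𝒮)
      hScover hSmem (fun i => (hlamfin (hSmem i)).ne) ?_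
    intro A hA
    set E : ℕ → Set S := fun n =>
      {s : S | |a s| ≤ (n : ℝ) ∧ |σsq s| ≤ (n : ℝ) ∧ |dν s| ≤ (n : ℝ)} ∩ A with hEdef
    have hES : ∀ n, E n ∈ 𝒮 := fun n => hint𝒮 (hEmeas n) hA
    have hEm : ∀ n, MeasurableSet (E n) := fun n => hmeasS (hES n)
    have hEmono : Monotone E := fun m n hmn =>
      inter_subset_inter_left _ fun s hs => by
        obtain ⟨h1, h2, h3⟩ := hs
        have hcast : (m : ℝ) ≤ (n : ℝ) := Nat.cast_le.2 hmn
        exact ⟨h1.trans hcast, h2.trans hcast, h3.trans hcast⟩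
    have hEunion : (⋃ n, E n) = A := by
      apply subset_antisymm (iUnion_subset fun n => inter_subset_right)
      intro s hs
      obtain ⟨n, hn⟩ := exists_nat_ge (max (|a s|) (max (|σsq s|) (|dν s|)))
      refine mem_iUnion.2 ⟨n, ⟨⟨?_, ?_, ?_⟩, hs⟩⟩
      · exact (le_max_left _ _).trans hn
      · exact ((le_max_left _ _).trans (le_max_right _ _)).trans hn
      · exact ((le_max_right _ _).trans (le_max_right _ _)).trans hn
    -- the key computation on each E n
    have hlamE : ∀ n, lam (E n) = (lam.withDensity g) (E n) := by
      intro n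
      have haE : IntegrableOn a (E n) lam :=
        hbddint a hameas (hES n) n fun s hs => hs.1.1
      have hσE : IntegrableOn σsq (E n) lam :=
        hbddint σsq hσmeas (hES n) n fun s hs => hs.1.2.1
      have hdνE : IntegrableOn dν (E n) lam :=
        hbddint dν hdνmeas (hES n) n fun s hs => hs.1.2.2
      have hσnn : 0 ≤ᵐ[lam.restrict (E n)] σsq := hgen_nonneg σsq hσpos (hES n) hσE
      have hdνnn : 0 ≤ᵐ[lam.restrict (E n)] dν := hgen_nonneg dν hdνpos (hES n) hdνE
      -- total variation sum equals the integral of |a|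
      have hT : sSup (TVSums 𝒮 ν₀ (E n)) = ∫ s in E n, |a s| ∂lam := by
        set P : Set S := {s | 0 ≤ a s} ∩ E n with hPdef
        set N : Set S := {s | a s < 0} ∩ E n with hNdef
        have hPS : P ∈ 𝒮 := hint𝒮 (measurableSet_le measurable_const hameas) (hES n)
        have hNS : N ∈ 𝒮 := hint𝒮 (measurableSet_lt hameas measurable_const) (hES n)
        have hPint : IntegrableOn a P lam := haE.mono_set inter_subset_right
        have hNint : IntegrableOn a N lam := haE.mono_set inter_subset_right
        have hdisj : Disjoint P N := by
          refine Set.disjoint_left.2 fun s hsP hsN => ?_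
          exact absurd (show (0:ℝ) ≤ a s from hsP.1)
            (not_le.2 (show a s < 0 from hsN.1))
        have hPN : P ∪ N = E n := by
          ext s
          simp only [hPdef, hNdef, mem_union, mem_inter_iff, mem_setOf_eq]
          constructor
          · rintro (⟨h1, h2⟩ | ⟨h1, h2⟩) <;> exact h2
          · intro h2
            rcases le_or_gt 0 (a s) with h | h
            · exact Or.inl ⟨h, h2⟩
            · exact Or.inr ⟨h, h2⟩
        have h1 : ∫ s in P, |a s| ∂lam = ν₀ P := by
          rw [haRN P hPS]
          exact setIntegral_congr_fun (hmeasS hPS) fun s hs => abs_of_nonneg hs.1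
        have h2 : ∫ s in N, |a s| ∂lam = -ν₀ N := by
          rw [haRN N hNS, ← integral_neg]
          exact setIntegral_congr_fun (hmeasS hNS) fun s hs => abs_of_neg hs.1
        have habs1 : |ν₀ P| = ∫ s in P, |a s| ∂lam := by
          rw [← h1]
          exact abs_of_nonneg (setIntegral_nonneg (hmeasS hPS) fun s _ => abs_nonneg _)
        have habs2 : |ν₀ N| = ∫ s in N, |a s| ∂lam := by
          have hnn : 0 ≤ ∫ s in N, |a s| ∂lam :=
            setIntegral_nonneg (hmeasS hNS) fun s _ => abs_nonneg _
          rw [abs_of_nonpos (by linarith [h2, hnn] : ν₀ N ≤ 0), ← h2]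
        have hsplit : ∫ s in E n, |a s| ∂lam
            = ∫ s in P, |a s| ∂lam + ∫ s in N, |a s| ∂lam := by
          rw [← hPN, setIntegral_union hdisj (hmeasS hNS) hPint.abs hNint.abs]
        refine IsGreatest.csSup_eq ⟨?_, ?_⟩
        · -- the two-block partition realizes the value
          refine ⟨SpecAux.pairSeq P N, SpecAux.pairSeq_mem h𝒮 hPS hNS,
            SpecAux.pairSeq_disj hdisj, by rw [SpecAux.pairSeq_iUnion, hPN], ?_⟩
          have hval : HasSum
              (fun k : ℕ => if k = 0 then |ν₀ P| else if k = 1 then |ν₀ N| else 0)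
              (|ν₀ P| + |ν₀ N|) := SpecAux.hasSum_pair _ _
          have hfe : (fun k : ℕ => |ν₀ (SpecAux.pairSeq P N k)|)
              = fun k : ℕ => if k = 0 then |ν₀ P| else if k = 1 then |ν₀ N| else 0 := by
            funext k
            by_cases h0 : k = 0 <;> by_cases h1 : k = 1 <;>
              simp [SpecAux.pairSeq, h0, h1, hν₀.1]
          rw [hfe, hsplit, ← habs1, ← habs2]
          exact hval
        · rintro r ⟨Pn, hPn𝒮, hPndisj, hPnU, hPnsum⟩
          have hPnm : ∀ k, MeasurableSet (Pn k) := fun k => hmeasS (hPn𝒮 k)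
          have hsum2 : HasSum (fun k => ∫ s in Pn k, |a s| ∂lam)
              (∫ s in E n, |a s| ∂lam) := by
            have hh := hasSum_integral_iUnion hPnm hPndisj
              (f := fun s => |a s|) (by rw [hPnU]; exact haE.abs)
            rwa [hPnU] at hh
          have hle : ∀ k, |ν₀ (Pn k)| ≤ ∫ s in Pn k, |a s| ∂lam := by
            intro k
            rw [haRN _ (hPn𝒮 k)]
            simpa [Real.norm_eq_abs] using
              norm_integral_le_integral_norm (μ := lam.restrict (Pn k)) a
          rw [← hPnsum.tsum_eq, ← hsum2.tsum_eq]
          exact Summable.tsum_le_tsum hle hPnsum.summable hsum2.summable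
      -- assemble
      have hfE : IntegrableOn f (E n) lam := (haE.abs.add hσE).add hdνE
      have hfnn : 0 ≤ᵐ[lam.restrict (E n)] f := by
        filter_upwards [hσnn, hdνnn] with s h1 h2
        have h1' : (0 : ℝ) ≤ σsq s := h1
        have h2' : (0 : ℝ) ≤ dν s := h2
        have h3 := abs_nonneg (a s)
        show (0 : ℝ) ≤ |a s| + σsq s + dν s
        linarith
      have hi1 : ∫ s in E n, (|a s| + σsq s) ∂lam
          = (∫ s in E n, |a s| ∂lam) + ∫ s in E n, σsq s ∂lam :=
        integral_add haE.abs hσE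
      have hi2 : ∫ s in E n, (|a s| + σsq s + dν s) ∂lam
          = (∫ s in E n, (|a s| + σsq s) ∂lam) + ∫ s in E n, dν s ∂lam :=
        integral_add (haE.abs.add hσE) hdνE
      have hsum3 : ∫ s in E n, |a s| ∂lam + ν₁ (E n)
          + sSup (RectSums 𝒮 (Jfun Fp Fm) (E n)) = ∫ s in E n, f s ∂lam := by
        rw [hσRN _ (hES n), hdνRN _ (hES n), ← hi1, ← hi2]
      rw [hlam _ (hES n), hT, hsum3,
        ofReal_integral_eq_lintegral_ofReal hfE hfnn,
        withDensity_apply g (hEm n)]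
    rw [← hEunion, hEmono.measure_iUnion, hEmono.measure_iUnion]
    exact iSup_congr hlamE
  haveI hsf : SigmaFinite lam :=
    ⟨⟨{ set := Sseq
        set_mem := fun _ => mem_univ _
        finite := fun n => hlamfin (hSmem n)
        spanning := hScover }⟩⟩
  have hae : g =ᵐ[lam] fun _ => (1 : ℝ≥0∞) := by
    refine ae_eq_of_forall_setLIntegral_eq_of_sigmaFinite₀ hgmeas.aemeasurable
      aemeasurable_const fun t ht hfint => ?_
    rw [← withDensity_apply g ht, ← hWD, lintegral_const, Measure.restrict_apply_univ,
      one_mul]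
  refine ⟨part1, ?_⟩
  filter_upwards [hae] with s hs
  exact ENNReal.ofReal_eq_one.1 hs
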